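/- Let G be a connected graph and P, P' distinguishable regular bounded profiles in G. Then the separations (A,B) that distinguish P and P' efficiently have only finitely many distinct separators A ∩ B. -/

import Mathlib

/-- A separation of a graph `G`: a pair of vertex sets covering `V` with no edge
between `A ∖ B` and `B ∖ A`. -/
structure GraphSep {V : Type} (G : SimpleGraph V) where
  A : Set V
  B : Set V
  union_eq : A ∪ B = Set.univ
  no_edge : ∀ a ∈ A \ B, ∀ b ∈ B \ A, ¬ G.Adj a b

namespace GraphSep

variable {V V' : Type} {G : SimpleGraph V} {G' : SimpleGraph V'}

/-- The inverse `(B,A)` of a separation `(A,B)`. -/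
def inv (s : GraphSep G) : GraphSep G where
  A := s.B
  B := s.A
  union_eq := by rw [Set.union_comm]; exact s.union_eq
  no_edge := fun a ha b hb h => s.no_edge b hb a ha h.symm

/-- The separator `A ∩ B`. -/
def sepSet (s : GraphSep G) : Set V := s.A ∩ s.B

/-- The order `|A ∩ B|` of a separation, as an extended natural number. -/
noncomputable def order (s : GraphSep G) : ℕ∞ := (s.A ∩ s.B).encard

/-- `(A,B) ≤ (C,D)` iff `A ⊆ C` and `D ⊆ B`. -/
protected def le (s t : GraphSep G) : Prop := s.A ⊆ t.A ∧ t.B ⊆ s.B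

/-- Two separations are nested if after possibly replacing either by its inverse
they are `≤`-comparable. -/
def Nested (s t : GraphSep G) : Prop :=
  s.le t ∨ s.le t.inv ∨ s.inv.le t ∨ s.inv.le t.inv

lemma mem_A_or_B (s : GraphSep G) (x : V) : x ∈ s.A ∨ x ∈ s.B := by
  have h : x ∈ s.A ∪ s.B := by rw [s.union_eq]; exact Set.mem_univ x
  exact (Set.mem_union _ _ _).1 h

/-- The join `(A,B) ∨ (C,D) = (A ∪ C, B ∩ D)`. -/
def join (s t : GraphSep G) : GraphSep G where
  A := s.A ∪ t.A
  B := s.B ∩ t.B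
  union_eq := by
    apply Set.eq_univ_of_forall
    intro x
    rcases s.mem_A_or_B x with h1 | h1
    · exact Or.inl (Or.inl h1)
    · rcases t.mem_A_or_B x with h2 | h2
      · exact Or.inl (Or.inr h2)
      · exact Or.inr ⟨h1, h2⟩
  no_edge := by
    rintro a ⟨haA, haB⟩ b ⟨hbB, hbA⟩ hadj
    by_cases hsB : a ∈ s.B
    · have hatB : a ∉ t.B := fun h => haB ⟨hsB, h⟩
      have hatA : a ∈ t.A := (t.mem_A_or_B a).resolve_right hatB
      exact t.no_edge a ⟨hatA, hatB⟩ b ⟨hbB.2, fun h => hbA (Or.inr h)⟩ hadj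
    · have hasA : a ∈ s.A := (s.mem_A_or_B a).resolve_right hsB
      exact s.no_edge a ⟨hasA, hsB⟩ b ⟨hbB.1, fun h => hbA (Or.inl h)⟩ hadj

/-- The image of a separation under a graph isomorphism. -/
def map (φ : G ≃g G') (s : GraphSep G) : GraphSep G' where
  A := ⇑φ '' s.A
  B := ⇑φ '' s.B
  union_eq := by
    apply Set.eq_univ_of_forall
    intro y
    rcases s.mem_A_or_B (φ.symm y) with h | h
    · exact Or.inl ⟨φ.symm y, h, φ.apply_symm_apply y⟩
    · exact Or.inr ⟨φ.symm y, h, φ.apply_symm_apply y⟩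
  no_edge := by
    rintro a ⟨⟨x, hxA, rfl⟩, haB⟩ b ⟨⟨y, hyB, rfl⟩, hbA⟩ hadj
    exact s.no_edge x ⟨hxA, fun h => haB ⟨x, h, rfl⟩⟩ y ⟨hyB, fun h => hbA ⟨y, h, rfl⟩⟩
      (φ.map_adj_iff.mp hadj)

/-- The neighbourhood of a set of vertices. -/
def nbhd (G : SimpleGraph V) (X : Set V) : Set V := {v | v ∉ X ∧ ∃ x ∈ X, G.Adj v x}

/-- `w` can be reached from `v` by a walk avoiding `X`. -/
def AvoidReach (G : SimpleGraph V) (X : Set V) (v w : V) : Prop :=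
  ∃ p : G.Walk v w, ∀ u ∈ p.support, u ∉ X

/-- `C` is a (connected) component of `G − X`. -/
def IsCompOf (G : SimpleGraph V) (X C : Set V) : Prop :=
  ∃ v, v ∉ X ∧ C = {w | AvoidReach G X v w}

/-- A separation `(A,B)` is tight if each of `A ∖ B` and `B ∖ A` contains a component
of `G − (A ∩ B)` whose neighbourhood is all of `A ∩ B`. -/
def IsTight (s : GraphSep G) : Prop :=
  (∃ C, IsCompOf G s.sepSet C ∧ nbhd G C = s.sepSet ∧ C ⊆ s.A \ s.B) ∧
  (∃ C, IsCompOf G s.sepSet C ∧ nbhd G C = s.sepSet ∧ C ⊆ s.B \ s.A)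

/-- An orientation of `S_k`: it contains only separations of order `< k`, contains
at least one of `s, s⁻¹` for every separation of order `< k`, and contains both only
if they coincide. -/
def IsOrientation (k : ℕ∞) (P : Set (GraphSep G)) : Prop :=
  (∀ s ∈ P, s.order < k) ∧
  (∀ s : GraphSep G, s.order < k → (s ∈ P ∨ s.inv ∈ P)) ∧
  (∀ s ∈ P, s.inv ∈ P → s.inv = s)

/-- Consistency: no two members `r, s` with distinct underlying separations satisfy
`r⁻¹ ≤ s`. -/
def Consistent (P : Set (GraphSep G)) : Prop :=
  ∀ r ∈ P, ∀ s ∈ P, r.inv.le s → r = s ∨ r = s.inv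

/-- A `k`-profile: a consistent orientation of `S_k` satisfying the profile property. -/
def IsProfile (k : ℕ∞) (P : Set (GraphSep G)) : Prop :=
  IsOrientation k P ∧ Consistent P ∧ ∀ s ∈ P, ∀ t ∈ P, (s.join t).inv ∉ P

/-- A profile in `G` is a `k`-profile for some `k ∈ ℕ ∪ {ℵ₀}`. -/
def IsProfileIn (G : SimpleGraph V) (P : Set (GraphSep G)) : Prop := ∃ k : ℕ∞, IsProfile k P

/-- A profile is regular if it contains no separation of the form `(V, X)`. -/
def RegularP (P : Set (GraphSep G)) : Prop := ∀ s ∈ P, s.A ≠ Set.univ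

/-- A profile is bounded if it is a `k`-profile for some finite `k` and is not a subset
of any `ℵ₀`-profile. -/
def BoundedP (P : Set (GraphSep G)) : Prop :=
  (∃ k : ℕ, IsProfile (k : ℕ∞) P) ∧ ∀ Q : Set (GraphSep G), IsProfile ⊤ Q → ¬ P ⊆ Q

/-- `s` distinguishes the profiles `P` and `P'`. -/
def Distinguishes (s : GraphSep G) (P P' : Set (GraphSep G)) : Prop :=
  (s ∈ P ∧ s.inv ∈ P') ∨ (s.inv ∈ P ∧ s ∈ P')

/-- `s` distinguishes `P` and `P'` efficiently: it has minimum order among all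
separations distinguishing `P` and `P'`. -/
def EffDist (s : GraphSep G) (P P' : Set (GraphSep G)) : Prop :=
  Distinguishes s P P' ∧ ∀ t : GraphSep G, Distinguishes t P P' → s.order ≤ t.order

/-- `P` and `P'` are distinguishable: some finite-order separation distinguishes them. -/
def Distinguishable (P P' : Set (GraphSep G)) : Prop :=
  ∃ s : GraphSep G, s.order < ⊤ ∧ Distinguishes s P P'

/-- Robustness of a profile. -/
def RobustP (P : Set (GraphSep G)) : Prop :=
  ∀ s ∈ P, ∀ t : GraphSep G, t.order < ⊤ →
    (s.join t).order < s.order → (s.join t.inv).order < s.order →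
    (s.join t ∈ P ∨ s.join t.inv ∈ P)

/-- A `k`-profile is principal if for every vertex set `X` with `|X| < k` it contains
`(V ∖ C, C ∪ X)` for some component `C` of `G − X`. -/
def PrincipalP (k : ℕ∞) (P : Set (GraphSep G)) : Prop :=
  ∀ X : Set V, X.encard < k →
    ∃ C, IsCompOf G X C ∧ ∃ s ∈ P, s.A = Cᶜ ∧ s.B = C ∪ X

/-- `c` is a corner separation of `s` and `t`. -/
def IsCornerSep (s t c : GraphSep G) : Prop :=
  ∃ s' ∈ ({s, s.inv} : Set (GraphSep G)), ∃ t' ∈ ({t, t.inv} : Set (GraphSep G)),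
    c = s'.join t' ∨ c = (s'.join t').inv

/-- The set `S ⊆ V ∖ {x,y}` separates `x` from `y` in `G`. -/
def SeparatesIn (G : SimpleGraph V) (x y : V) (S : Set V) : Prop :=
  x ∉ S ∧ y ∉ S ∧ ∀ p : G.Walk x y, ∃ u ∈ p.support, u ∈ S

/-- `S` is a `⊆`-minimal `x`–`y`-separator in `G`. -/
def MinSeparator (G : SimpleGraph V) (x y : V) (S : Set V) : Prop :=
  SeparatesIn G x y S ∧ ∀ S' ⊆ S, SeparatesIn G x y S' → S' = S

/-- The separation of `G` induced by an (oriented) edge of a tree-decomposition. -/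
def InducedSep {ι : Type} (T : SimpleGraph ι) (𝒱 : ι → Set V) (x : GraphSep G) : Prop :=
  ∃ t t' : ι, T.Adj t t' ∧
    x.A = (⋃ u ∈ {u : ι | ∃ p : T.Walk u t, Sym2.mk t t' ∉ p.edges}, 𝒱 u) ∧
    x.B = (⋃ u ∈ {u : ι | ∃ p : T.Walk u t', Sym2.mk t t' ∉ p.edges}, 𝒱 u)

/-- Opposite pairs of corner separations of `s` and `t`. -/
def OppPair (s t c d : GraphSep G) : Prop :=
  (c = s.join t ∧ d = s.inv.join t.inv) ∨ (c = s.inv.join t.inv ∧ d = s.join t) ∨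
  (c = s.join t.inv ∧ d = s.inv.join t) ∨ (c = s.inv.join t ∧ d = s.join t.inv)

end GraphSep

section Stmt9Aux

open GraphSep

variable {V : Type} {G : SimpleGraph V}

@[simp] lemma GS_inv_A (s : GraphSep G) : s.inv.A = s.B := rfl
@[simp] lemma GS_inv_B (s : GraphSep G) : s.inv.B = s.A := rfl
@[simp] lemma GS_join_A (s t : GraphSep G) : (s.join t).A = s.A ∪ t.A := rfl
@[simp] lemma GS_join_B (s t : GraphSep G) : (s.join t).B = s.B ∩ t.B := rfl

lemma GS_ext {s t : GraphSep G} (hA : s.A = t.A) (hB : s.B = t.B) : s = t := by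
  cases s; cases t; simp_all

@[simp] lemma GS_inv_inv (s : GraphSep G) : s.inv.inv = s := rfl

lemma GS_order_inv (s : GraphSep G) : s.inv.order = s.order := by
  unfold GraphSep.order
  simp [Set.inter_comm]

lemma GS_order_def (s : GraphSep G) : s.order = (s.A ∩ s.B).encard := rfl

lemma GS_B_univ {s : GraphSep G} (h : s.A ⊆ s.B) : s.B = Set.univ := by
  have := s.union_eq
  rw [Set.union_eq_self_of_subset_left h] at this
  exact this

lemma GS_distinguishes_inv {P P' : Set (GraphSep G)} {s : GraphSep G}
    (h : Distinguishes s P P') : Distinguishes s.inv P P' := by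
  unfold Distinguishes at *
  rw [GS_inv_inv]
  tauto

lemma GS_effdist_inv {P P' : Set (GraphSep G)} {s : GraphSep G}
    (h : EffDist s P P') : EffDist s.inv P P' := by
  refine ⟨GS_distinguishes_inv h.1, fun t ht => ?_⟩
  rw [GS_order_inv]
  exact h.2 t ht

end Stmt9Aux

section Stmt9Aux2

open GraphSep

variable {V : Type} {G : SimpleGraph V}

/-- Pigeonhole: a map from an infinite set into a finite set has an infinite fiber. -/
lemma GS_pigeon {I : Set ℕ} (hI : I.Infinite) {F : Set V} (hF : F.Finite) (g : ℕ → V)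
    (hg : ∀ i ∈ I, g i ∈ F) : ∃ w ∈ F, {i | i ∈ I ∧ g i = w}.Infinite := by
  by_contra h
  push_neg at h
  have hsub : I ⊆ ⋃ w ∈ F, {i | i ∈ I ∧ g i = w} := by
    intro i hi
    exact Set.mem_biUnion (hg i hi) ⟨hi, rfl⟩
  have : I.Finite := Set.Finite.subset
    (Set.Finite.biUnion hF (fun w hw => (h w hw))) hsub
  exact hI this

/-- A walk from the strict A-side to the strict B-side crosses the separator. -/
lemma GS_walk_cross {s : GraphSep G} : ∀ {a b : V} (p : G.Walk a b),
    a ∈ s.A → a ∉ s.B → b ∈ s.B → b ∉ s.A → ∃ u ∈ p.support, u ∈ s.A ∧ u ∈ s.B := by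
  intro a b p
  induction p with
  | nil =>
    intro h1 h2 h3 _
    exact absurd h3 h2
  | @cons a c b hadj q ih =>
    intro ha1 ha2 hb1 hb2
    by_cases hc1 : c ∈ s.A
    · by_cases hc2 : c ∈ s.B
      · exact ⟨c, by simp [SimpleGraph.Walk.support_cons], hc1, hc2⟩
      · obtain ⟨u, hu, h⟩ := ih hc1 hc2 hb1 hb2
        exact ⟨u, by simp [SimpleGraph.Walk.support_cons]; right; exact hu, h⟩
    · have hc2 : c ∈ s.B := (s.mem_A_or_B c).resolve_left hc1
      exact absurd hadj (s.no_edge a ⟨ha1, ha2⟩ c ⟨hc2, hc1⟩)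

/-! AvoidReach lemmas -/

lemma AR_not_mem_start {Y : Set V} {v w : V} (h : AvoidReach G Y v w) : v ∉ Y := by
  obtain ⟨p, hp⟩ := h
  exact hp v p.start_mem_support

lemma AR_not_mem_end {Y : Set V} {v w : V} (h : AvoidReach G Y v w) : w ∉ Y := by
  obtain ⟨p, hp⟩ := h
  exact hp w p.end_mem_support

lemma AR_refl {Y : Set V} {v : V} (h : v ∉ Y) : AvoidReach G Y v v := by
  refine ⟨SimpleGraph.Walk.nil, ?_⟩
  intro u hu
  simp [SimpleGraph.Walk.support_nil] at hu
  subst hu; exact h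

lemma AR_symm {Y : Set V} {v w : V} (h : AvoidReach G Y v w) : AvoidReach G Y w v := by
  obtain ⟨p, hp⟩ := h
  refine ⟨p.reverse, ?_⟩
  intro u hu
  rw [SimpleGraph.Walk.support_reverse] at hu
  exact hp u (List.mem_reverse.mp hu)

lemma AR_trans {Y : Set V} {u v w : V} (h1 : AvoidReach G Y u v) (h2 : AvoidReach G Y v w) :
    AvoidReach G Y u w := by
  obtain ⟨p, hp⟩ := h1
  obtain ⟨q, hq⟩ := h2
  refine ⟨p.append q, ?_⟩
  intro x hx
  rcases (SimpleGraph.Walk.mem_support_append_iff _ _).mp hx with h | h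
  · exact hp x h
  · exact hq x h

lemma AR_adj {Y : Set V} {v x u : V} (h : AvoidReach G Y v x) (ha : G.Adj x u) (hu : u ∉ Y) :
    AvoidReach G Y v u := by
  refine AR_trans h ⟨SimpleGraph.Walk.cons ha SimpleGraph.Walk.nil, ?_⟩
  intro y hy
  simp [SimpleGraph.Walk.support_cons, SimpleGraph.Walk.support_nil] at hy
  rcases hy with rfl | rfl
  · exact AR_not_mem_end h
  · exact hu

/-- The component ("pocket") of `v` in `G - Y`. -/
def GS_pocket (G : SimpleGraph V) (Y : Set V) (v : V) : Set V := {w | AvoidReach G Y v w}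

lemma GS_pocket_not_mem_Y {Y : Set V} {v w : V} (h : w ∈ GS_pocket G Y v) : w ∉ Y :=
  AR_not_mem_end h

lemma GS_mem_pocket_self {Y : Set V} {v : V} (h : v ∉ Y) : v ∈ GS_pocket G Y v := AR_refl h

lemma GS_pocket_disj {Y : Set V} {w w' : V} (h : w' ∉ GS_pocket G Y w) :
    ∀ u, u ∈ GS_pocket G Y w → u ∉ GS_pocket G Y w' := by
  intro u hu hu'
  exact h (AR_trans hu (AR_symm hu'))

/-- The pocket separation `(Kᶜ, K ∪ Y)` for `K` the component of `v` in `G−Y`. -/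
def GS_pocketSep (G : SimpleGraph V) (Y : Set V) (v : V) : GraphSep G where
  A := (GS_pocket G Y v)ᶜ
  B := GS_pocket G Y v ∪ Y
  union_eq := by
    ext u
    simp only [Set.mem_union, Set.mem_compl_iff, Set.mem_univ, iff_true]
    tauto
  no_edge := by
    intro a ha b hb hadj
    simp only [Set.mem_diff, Set.mem_compl_iff, Set.mem_union] at ha hb
    have hbK : b ∈ GS_pocket G Y v := by tauto
    have haY : a ∉ Y := by tauto
    exact ha.1 (AR_adj hbK hadj.symm haY)

@[simp] lemma GS_pocketSep_A (Y : Set V) (v : V) :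
    (GS_pocketSep G Y v).A = (GS_pocket G Y v)ᶜ := rfl

@[simp] lemma GS_pocketSep_B (Y : Set V) (v : V) :
    (GS_pocketSep G Y v).B = GS_pocket G Y v ∪ Y := rfl

lemma GS_pocketSep_sep (Y : Set V) (v : V) :
    (GS_pocketSep G Y v).A ∩ (GS_pocketSep G Y v).B = Y := by
  ext u
  simp only [GS_pocketSep_A, GS_pocketSep_B, Set.mem_inter_iff, Set.mem_compl_iff, Set.mem_union]
  constructor
  · rintro ⟨h1, h2 | h2⟩
    · exact absurd h2 h1
    · exact h2
  · intro hu
    exact ⟨fun hK => GS_pocket_not_mem_Y hK hu, Or.inr hu⟩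

lemma GS_pocketSep_order (Y : Set V) (v : V) :
    (GS_pocketSep G Y v).order = Y.encard := by
  rw [GS_order_def, GS_pocketSep_sep]

end Stmt9Aux2

section Stmt9Aux3

open GraphSep

variable {V : Type} {G : SimpleGraph V}

/-- For a nonprincipal ultrafilter `U`, orienting all finite-order separations towards `U`
gives an `ℵ₀`-profile. -/
lemma GS_QU_isProfile (U : Ultrafilter V) (hU : ∀ S : Set V, S.Finite → S ∉ U) :
    IsProfile (⊤ : ℕ∞) {t : GraphSep G | t.order < ⊤ ∧ t.B ∈ U} := by
  have horder : ∀ t : GraphSep G, t.order < ⊤ → (t.A ∩ t.B).Finite := by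
    intro t ht
    rw [GS_order_def] at ht
    exact Set.encard_lt_top_iff.mp ht
  refine ⟨⟨fun s hs => hs.1, ?_, ?_⟩, ?_, ?_⟩
  · intro s hs
    have huniv : s.A ∪ s.B ∈ U := by rw [s.union_eq]; exact Filter.univ_mem
    rcases (Ultrafilter.union_mem_iff.mp huniv) with h | h
    · right
      refine ⟨by rwa [GS_order_inv], h⟩
    · left; exact ⟨hs, h⟩
  · intro s hs hsi
    exfalso
    have : s.A ∩ s.B ∈ U := Filter.inter_mem hsi.2 hs.2
    exact hU _ (horder s hs.1) this
  · intro r hr s hs hle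
    exfalso
    obtain ⟨h1, h2⟩ := hle
    have hmem : r.B ∩ s.B ∈ U := Filter.inter_mem hr.2 hs.2
    have hsub : r.B ∩ s.B ⊆ s.A ∩ s.B := fun x hx => ⟨h1 hx.1, hx.2⟩
    exact hU _ ((horder s hs.1).subset hsub) hmem
  · intro s hs t ht hmem
    have h1 : (s.A ∪ t.A) ∩ (s.B ∩ t.B) ∈ U :=
      Filter.inter_mem hmem.2 (Filter.inter_mem hs.2 ht.2)
    have hfin : ((s.A ∪ t.A) ∩ (s.B ∩ t.B)).Finite := by
      refine Set.Finite.subset (Set.Finite.union (horder s hs.1) (horder t ht.1)) ?_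
      intro x hx
      simp only [Set.mem_inter_iff, Set.mem_union] at hx ⊢
      tauto
    exact hU _ hfin h1

/-- The pushforward of the hyperfilter along an injective sequence is nonprincipal. -/
lemma GS_Umap_nonprin {z : ℕ → V} (hz : Function.Injective z) :
    ∀ S : Set V, S.Finite → S ∉ (Filter.hyperfilter ℕ).map z := by
  intro S hS hmem
  rw [Ultrafilter.mem_map] at hmem
  have : (z ⁻¹' S).Finite := Set.Finite.preimage (Function.Injective.injOn hz) hS
  exact Filter.notMem_hyperfilter_of_finite this hmem

lemma GS_hyper_infinite {T : Set ℕ} (hT : T ∈ Filter.hyperfilter ℕ) : T.Infinite := by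
  by_contra h
  exact Filter.notMem_hyperfilter_of_finite (Set.not_infinite.mp h) hT

/-- The key consequence of boundedness: for any injective sequence `z`, some member `(C,D)`
of `P` has `z i ∉ D` for "most" indices. -/
lemma GS_bdd_escape {P : Set (GraphSep G)} (hbdd : BoundedP P) {z : ℕ → V}
    (hz : Function.Injective z) :
    ∃ c ∈ P, {i : ℕ | z i ∉ c.B} ∈ Filter.hyperfilter ℕ := by
  obtain ⟨⟨k, hk⟩, hb⟩ := hbdd
  set U : Ultrafilter V := (Filter.hyperfilter ℕ).map z with hUdef
  have hU := GS_Umap_nonprin hz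
  have hQU := GS_QU_isProfile (G := G) U hU
  have := hb _ hQU
  rw [Set.not_subset] at this
  obtain ⟨c, hcP, hcQ⟩ := this
  refine ⟨c, hcP, ?_⟩
  have hord : c.order < (⊤ : ℕ∞) := lt_of_lt_of_le (hk.1.1 c hcP) le_top
  have hBU : c.B ∉ U := by
    intro h
    exact hcQ ⟨hord, h⟩
  have : c.Bᶜ ∈ U := Ultrafilter.compl_mem_iff_notMem.mpr hBU
  rw [hUdef, Ultrafilter.mem_map] at this
  exact this

end Stmt9Aux3

section Stmt9Aux4

open GraphSep

variable {V : Type} {G : SimpleGraph V}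

lemma GS_list_union_finite : ∀ (l : List (Set V)), (∀ X ∈ l, X.Finite) →
    {x | ∃ X ∈ l, x ∈ X}.Finite := by
  intro l
  induction l with
  | nil =>
    intro _
    have h : {x : V | ∃ X ∈ ([] : List (Set V)), x ∈ X} = ∅ := by ext x; simp
    rw [h]; exact Set.finite_empty
  | cons X l ih =>
    intro h
    have : {x | ∃ X' ∈ X :: l, x ∈ X'} = X ∪ {x | ∃ X' ∈ l, x ∈ X'} := by
      ext x; simp only [List.mem_cons, Set.mem_setOf_eq, Set.mem_union]
      constructor
      · rintro ⟨X', hX', hx⟩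
        rcases hX' with rfl | hX'
        · exact Or.inl hx
        · exact Or.inr ⟨X', hX', hx⟩
      · rintro (hx | ⟨X', hX', hx⟩)
        · exact ⟨X, Or.inl rfl, hx⟩
        · exact ⟨X', Or.inr hX', hx⟩
    rw [this]
    exact Set.Finite.union (h X (by simp)) (ih (fun X' hX' => h X' (by simp [hX'])))

/-- Infinite sunflower lemma for an infinite family of sets of equal finite size. -/
lemma GS_sunflower : ∀ (m : ℕ) (𝒜 : Set (Set V)), 𝒜.Infinite →
    (∀ X ∈ 𝒜, X.encard = m) →
    ∃ (Y : Set V) (F : ℕ → Set V), (∀ i, F i ∈ 𝒜) ∧ (∀ i, Y ⊆ F i) ∧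
      (∀ i, (F i \ Y).Nonempty) ∧ (∀ i j, i ≠ j → (F i \ Y) ∩ (F j \ Y) = ∅) := by
  intro m
  induction m with
  | zero =>
    intro 𝒜 hinf hcard
    exfalso
    have : 𝒜 ⊆ {∅} := by
      intro X hX
      have := hcard X hX
      simp only [Nat.cast_zero, Set.encard_eq_zero] at this
      simp [this]
    exact hinf (Set.Finite.subset (Set.finite_singleton _) this)
  | succ m ih =>
    intro 𝒜 hinf hcard
    by_cases hv : ∃ v, {X | X ∈ 𝒜 ∧ v ∈ X}.Infinite
    · -- some vertex is in infinitely many members: put it in the core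
      obtain ⟨v, hv⟩ := hv
      set 𝒜' := (fun X => X \ {v}) '' {X | X ∈ 𝒜 ∧ v ∈ X} with h𝒜'
      have hinj : Set.InjOn (fun X => X \ {v}) {X | X ∈ 𝒜 ∧ v ∈ X} := by
        intro X hX X' hX' h
        have h' : X \ {v} = X' \ {v} := h
        have : insert v (X \ {v}) = insert v (X' \ {v}) := by rw [h']
        rwa [Set.insert_diff_singleton, Set.insert_diff_singleton,
          Set.insert_eq_of_mem hX.2, Set.insert_eq_of_mem hX'.2] at this
      have h𝒜'inf : 𝒜'.Infinite := Set.Infinite.image hinj hv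
      have h𝒜'card : ∀ W ∈ 𝒜', W.encard = m := by
        rintro W ⟨X, hX, rfl⟩
        have h1 : (X \ {v}).encard + 1 = X.encard := Set.encard_diff_singleton_add_one hX.2
        have h2 : (X \ {v}).encard + 1 = (m : ℕ∞) + 1 := by
          rw [h1, hcard X hX.1]; push_cast; ring
        exact (ENat.add_left_injective_of_ne_top ENat.one_ne_top) h2
      obtain ⟨Y', F', hF'mem, hF'sub, hF'ne, hF'disj⟩ := ih 𝒜' h𝒜'inf h𝒜'card
      have hchoose : ∀ i, ∃ X, (X ∈ 𝒜 ∧ v ∈ X) ∧ X \ {v} = F' i := fun i => hF'mem i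
      choose Xf hXf1 hXf2 using hchoose
      refine ⟨insert v Y', Xf, fun i => (hXf1 i).1, ?_, ?_, ?_⟩
      · intro i
        apply Set.insert_subset (hXf1 i).2
        refine subset_trans (hF'sub i) ?_
        rw [← hXf2 i]
        exact Set.diff_subset
      · intro i
        have : Xf i \ insert v Y' = F' i \ Y' := by
          rw [← hXf2 i]; ext u; simp only [Set.mem_diff, Set.mem_insert_iff,
            Set.mem_singleton_iff]; tauto
        rw [this]; exact hF'ne i
      · intro i j hij
        have e1 : Xf i \ insert v Y' = F' i \ Y' := by
          rw [← hXf2 i]; ext u; simp only [Set.mem_diff, Set.mem_insert_iff,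
            Set.mem_singleton_iff]; tauto
        have e2 : Xf j \ insert v Y' = F' j \ Y' := by
          rw [← hXf2 j]; ext u; simp only [Set.mem_diff, Set.mem_insert_iff,
            Set.mem_singleton_iff]; tauto
        rw [e1, e2]; exact hF'disj i j hij
    · -- every vertex is in only finitely many members: greedy disjoint family
      push_neg at hv
      have hfin : ∀ X ∈ 𝒜, X.Finite := by
        intro X hX
        rw [← Set.encard_ne_top_iff, hcard X hX]
        exact WithTop.natCast_ne_top _
      have step : ∀ W : Set V, W.Finite → ∃ X, X ∈ 𝒜 ∧ ∀ w ∈ W, w ∉ X := by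
        intro W hW
        have hbad : (⋃ w ∈ W, {X | X ∈ 𝒜 ∧ w ∈ X}).Finite :=
          Set.Finite.biUnion hW (fun w _ => (hv w))
        obtain ⟨X, hX⟩ := (Set.Infinite.diff hinf hbad).nonempty
        refine ⟨X, hX.1, fun w hw hwX => hX.2 (Set.mem_biUnion hw ⟨hX.1, hwX⟩)⟩
      have step' : ∀ W : Set V, ∃ X, W.Finite → (X ∈ 𝒜 ∧ ∀ w ∈ W, w ∉ X) := by
        intro W
        by_cases h : W.Finite
        · obtain ⟨X, hX⟩ := step W h; exact ⟨X, fun _ => hX⟩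
        · exact ⟨∅, fun h' => absurd h' h⟩
      choose pick hpick using step'
      set builder : ℕ → List (Set V) :=
        fun n => Nat.rec [] (fun _ l => pick {x | ∃ X ∈ l, x ∈ X} :: l) n with hbuilder
      have hbuildsucc : ∀ n, builder (n + 1) =
          pick {x | ∃ X ∈ builder n, x ∈ X} :: builder n := fun n => rfl
      have hmem𝒜 : ∀ n, ∀ X ∈ builder n, X ∈ 𝒜 := by
        intro n
        induction n with
        | zero => intro X hX; simp [hbuilder] at hX
        | succ n ihn =>
          intro X hX
          rw [hbuildsucc] at hX
          rcases List.mem_cons.mp hX with rfl | hX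
          · exact (hpick _ (GS_list_union_finite _ (fun X' hX' => hfin X' (ihn X' hX')))).1
          · exact ihn X hX
      set f : ℕ → Set V := fun n => pick {x | ∃ X ∈ builder n, x ∈ X} with hf
      have hf𝒜 : ∀ n, f n ∈ 𝒜 := by
        intro n
        exact (hpick _ (GS_list_union_finite _ (fun X' hX' => hfin X' (hmem𝒜 n X' hX')))).1
      have hfavoid : ∀ n, ∀ X ∈ builder n, ∀ x ∈ X, x ∉ f n := by
        intro n X hX x hx
        exact (hpick _ (GS_list_union_finite _ (fun X' hX' => hfin X' (hmem𝒜 n X' hX')))).2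
          x ⟨X, hX, hx⟩
      have hmono : ∀ n m, n ≤ m → ∀ X ∈ builder n, X ∈ builder m := by
        intro n m hnm
        induction m with
        | zero => intro X hX; rw [Nat.le_zero] at hnm; subst hnm; exact hX
        | succ m ihm =>
          intro X hX
          rcases Nat.lt_or_ge n (m+1) with h | h
          · rw [hbuildsucc]
            exact List.mem_cons.mpr (Or.inr (ihm (Nat.lt_succ_iff.mp h) X hX))
          · have : n = m + 1 := le_antisymm hnm h
            subst this; exact hX
      have hfb : ∀ n, f n ∈ builder (n+1) := by
        intro n; rw [hbuildsucc]; exact List.mem_cons_self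
      have hdisj : ∀ i j, i < j → (f i) ∩ (f j) = ∅ := by
        intro i j hij
        ext x
        simp only [Set.mem_inter_iff, Set.mem_empty_iff_false, iff_false, not_and]
        intro hxi
        exact hfavoid j (f i) (hmono (i+1) j hij (f i) (hfb i)) x hxi
      refine ⟨∅, f, hf𝒜, fun i => Set.empty_subset _, ?_, ?_⟩
      · intro i
        rw [Set.diff_empty, Set.nonempty_iff_ne_empty]
        intro h
        have := hcard (f i) (hf𝒜 i)
        rw [h] at this
        simp only [Set.encard_empty] at this
        have h2 : (m + 1 : ℕ) = 0 := by exact_mod_cast this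
        omega
      · intro i j hij
        rw [Set.diff_empty, Set.diff_empty]
        rcases Nat.lt_or_ge i j with h | h
        · exact hdisj i j h
        · rw [Set.inter_comm]
          exact hdisj j i (lt_of_le_of_ne h (Ne.symm hij))

end Stmt9Aux4

section Stmt9Aux5

open GraphSep

variable {V : Type} {G : SimpleGraph V} {P P' : Set (GraphSep G)} {k k' : ℕ} {m : ℕ∞}

lemma GS_A_univ {s : GraphSep G} (h : s.B ⊆ s.A) : s.A = Set.univ := by
  have := s.union_eq
  rw [Set.union_eq_self_of_subset_right h] at this
  exact this

lemma GS_orientP (hPk : IsProfile (k : ℕ∞) P) {s : GraphSep G}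
    (h1 : s.order < k) (h2 : s.inv ∉ P) : s ∈ P :=
  (hPk.1.2.1 s h1).resolve_right h2

lemma GS_SS1 (hP'k : IsProfile (k' : ℕ∞) P')
    (hmin : ∀ u : GraphSep G, Distinguishes u P P' → m ≤ u.order) (hmk' : m < k')
    {t : GraphSep G} (ht : t ∈ P) (hord : t.order < m) : t ∈ P' := by
  rcases hP'k.1.2.1 t (hord.trans hmk') with h | h
  · exact h
  · exact absurd (hmin t (Or.inl ⟨ht, h⟩)) (not_le.mpr hord)

lemma GS_SS2 (hPk : IsProfile (k : ℕ∞) P)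
    (hmin : ∀ u : GraphSep G, Distinguishes u P P' → m ≤ u.order) (hmk : m < k)
    {t : GraphSep G} (ht : t ∈ P') (hord : t.order < m) : t ∈ P := by
  rcases hPk.1.2.1 t (hord.trans hmk) with h | h
  · exact h
  · exfalso
    have hd : Distinguishes t.inv P P' := Or.inl ⟨h, by rw [GS_inv_inv]; exact ht⟩
    have := hmin _ hd
    rw [GS_order_inv] at this
    exact absurd this (not_le.mpr hord)

/-- Payment lemma on the `P`-side: the separator of `c ∈ P` meets the strict `B`-side of any
efficient distinguisher whose separator escapes `c.B`. -/
lemma GS_F1 (hPk : IsProfile (k : ℕ∞) P) (hP'k : IsProfile (k' : ℕ∞) P')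
    (hreg : RegularP P) (hreg' : RegularP P')
    (hmin : ∀ u : GraphSep G, Distinguishes u P P' → m ≤ u.order)
    (hmk : m < k) (hmk' : m < k')
    {s c : GraphSep G} {z : V} (hs : s ∈ P) (hs' : s.inv ∈ P') (hc : c ∈ P)
    (hz : z ∈ s.A ∩ s.B) (hzD : z ∉ c.B) (hm : s.order = m) :
    ((c.A ∩ c.B) ∩ (s.B \ s.A)).Nonempty := by
  rw [Set.nonempty_iff_ne_empty]
  intro hemp
  set j := s.join c with hj
  have hjinvP : j.inv ∉ P := hPk.2.2 s hs c hc
  have hsub : j.A ∩ j.B ⊆ (s.A ∩ s.B) \ {z} := by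
    intro u hu
    simp only [hj, GS_join_A, GS_join_B, Set.mem_inter_iff, Set.mem_union] at hu
    obtain ⟨hu1, hu2, hu3⟩ := hu
    have huA : u ∈ s.A := by
      rcases hu1 with h | h
      · exact h
      · by_contra huA
        have : u ∈ (c.A ∩ c.B) ∩ (s.B \ s.A) := ⟨⟨h, hu3⟩, hu2, huA⟩
        rw [hemp] at this
        exact this
    refine ⟨⟨huA, hu2⟩, ?_⟩
    simp only [Set.mem_singleton_iff]
    rintro rfl
    exact hzD hu3
  have hsfin : (s.A ∩ s.B).Finite := by
    rw [← Set.encard_lt_top_iff, ← GS_order_def, hm]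
    exact lt_of_lt_of_le hmk le_top
  have hjord : j.order < m := by
    rw [GS_order_def]
    calc (j.A ∩ j.B).encard ≤ ((s.A ∩ s.B) \ {z}).encard := Set.encard_mono hsub
      _ < (s.A ∩ s.B).encard := by
          refine Set.Finite.encard_lt_encard hsfin.diff ⟨Set.diff_subset, fun hss => ?_⟩
          exact (hss hz).2 rfl
      _ = m := by rw [← GS_order_def, hm]
  have hjP : j ∈ P := GS_orientP hPk (hjord.trans hmk) hjinvP
  have hjP' : j ∈ P' := GS_SS1 hP'k hmin hmk' hjP hjord
  have hle : GraphSep.le s.inv.inv j := ⟨Set.subset_union_left, Set.inter_subset_left⟩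
  rcases hP'k.2.1 s.inv hs' j hjP' hle with he | he
  · have hBA : s.B = s.A ∪ c.A := congrArg GraphSep.A he
    have hsub2 : s.A ⊆ s.B := by rw [hBA]; exact Set.subset_union_left
    exact hreg' s.inv hs' (GS_B_univ hsub2)
  · have hBB : s.B = s.B ∩ c.B := congrArg GraphSep.A he
    have : s.B ⊆ c.B := by rw [hBB]; exact Set.inter_subset_right
    exact hzD (this hz.2)

/-- Payment lemma on the `P'`-side. -/
lemma GS_F1' (hPk : IsProfile (k : ℕ∞) P) (hP'k : IsProfile (k' : ℕ∞) P')
    (hreg : RegularP P) (hreg' : RegularP P')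
    (hmin : ∀ u : GraphSep G, Distinguishes u P P' → m ≤ u.order)
    (hmk : m < k) (hmk' : m < k')
    {s c' : GraphSep G} {z : V} (hs : s ∈ P) (hs' : s.inv ∈ P') (hc' : c' ∈ P')
    (hz : z ∈ s.A ∩ s.B) (hzD' : z ∉ c'.B) (hm : s.order = m) :
    ((c'.A ∩ c'.B) ∩ (s.A \ s.B)).Nonempty := by
  rw [Set.nonempty_iff_ne_empty]
  intro hemp
  set j := s.inv.join c' with hj
  have hjinvP' : j.inv ∉ P' := hP'k.2.2 s.inv hs' c' hc'
  have hsub : j.A ∩ j.B ⊆ (s.A ∩ s.B) \ {z} := by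
    intro u hu
    simp only [hj, GS_join_A, GS_join_B, GS_inv_A, GS_inv_B, Set.mem_inter_iff,
      Set.mem_union] at hu
    obtain ⟨hu1, hu2, hu3⟩ := hu
    have huB : u ∈ s.B := by
      rcases hu1 with h | h
      · exact h
      · by_contra huB
        have : u ∈ (c'.A ∩ c'.B) ∩ (s.A \ s.B) := ⟨⟨h, hu3⟩, hu2, huB⟩
        rw [hemp] at this
        exact this
    refine ⟨⟨hu2, huB⟩, ?_⟩
    simp only [Set.mem_singleton_iff]
    rintro rfl
    exact hzD' hu3
  have hsfin : (s.A ∩ s.B).Finite := by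
    rw [← Set.encard_lt_top_iff, ← GS_order_def, hm]
    exact lt_of_lt_of_le hmk le_top
  have hjord : j.order < m := by
    rw [GS_order_def]
    calc (j.A ∩ j.B).encard ≤ ((s.A ∩ s.B) \ {z}).encard := Set.encard_mono hsub
      _ < (s.A ∩ s.B).encard := by
          refine Set.Finite.encard_lt_encard hsfin.diff ⟨Set.diff_subset, fun hss => ?_⟩
          exact (hss hz).2 rfl
      _ = m := by rw [← GS_order_def, hm]
  have hjP' : j ∈ P' := GS_orientP hP'k (hjord.trans hmk') hjinvP'
  have hjP : j ∈ P := GS_SS2 hPk hmin hmk hjP' hjord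
  have hle : GraphSep.le s.inv j := ⟨Set.subset_union_left, Set.inter_subset_left⟩
  rcases hPk.2.1 s hs j hjP hle with he | he
  · have hAB : s.A = s.B ∪ c'.A := congrArg GraphSep.A he
    have hsub2 : s.B ⊆ s.A := by rw [hAB]; exact Set.subset_union_left
    exact hreg s hs (GS_A_univ hsub2)
  · have hAA : s.A = s.A ∩ c'.B := congrArg GraphSep.A he
    have : s.A ⊆ c'.B := by rw [hAA]; exact Set.inter_subset_right
    exact hzD' (this hz.1)

end Stmt9Aux5

section Stmt9Aux6

open GraphSep

variable {V : Type} {G : SimpleGraph V} {P P' : Set (GraphSep G)} {k k' : ℕ} {m : ℕ∞}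

/-- Phase 2 of the main argument: the anchor `w` and its component `K` in `G−Y` are fixed and
all petals lie inside `K`; the `w'`-side anchor is repeatedly replaced, consuming elements of
the separator of `c'`. -/
lemma GS_phase2 (hPk : IsProfile (k : ℕ∞) P) (hP'k : IsProfile (k' : ℕ∞) P')
    (hreg : RegularP P) (hreg' : RegularP P')
    (hmin : ∀ u : GraphSep G, Distinguishes u P P' → m ≤ u.order)
    (hmk : m < k) (hmk' : m < k')
    (Y : Set V) (X : ℕ → Set V) (z : ℕ → V) (c' : GraphSep G) (hc' : c' ∈ P')
    (hYsub : ∀ i, Y ⊆ X i)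
    (hdisj : ∀ i j, i ≠ j → (X i \ Y) ∩ (X j \ Y) = ∅)
    (hXm : ∀ i, (X i).encard = m)
    (hzX : ∀ i, z i ∈ X i) (hzc' : ∀ i, z i ∉ c'.B)
    (hYm : Y.encard < m)
    (w : V) :
    ∀ (r : ℕ) (fam : ℕ → GraphSep G) (I : Set ℕ) (T : Set V) (w' : V),
    I.Infinite →
    (∀ i ∈ I, fam i ∈ P) →
    (∀ i ∈ I, (fam i).inv ∈ P') →
    (∀ i ∈ I, (fam i).A ∩ (fam i).B = X i) →
    (∀ i ∈ I, w ∈ (fam i).B ∧ w ∉ (fam i).A) →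
    (∀ i ∈ I, w' ∈ (fam i).A ∧ w' ∉ (fam i).B) →
    (∀ i ∈ I, X i \ Y ⊆ GS_pocket G Y w) →
    (w' ∈ (c'.A ∩ c'.B) \ T) →
    (∀ x ∈ T, ∀ i ∈ I, x ∈ (fam i).B ∧ x ∉ (fam i).A) →
    ((c'.A ∩ c'.B) \ T).encard ≤ r →
    False := by
  intro r
  induction r with
  | zero =>
    intro fam I T w' _ _ _ _ _ _ _ hw'T _ hmeas
    rw [Nat.cast_zero, nonpos_iff_eq_zero, Set.encard_eq_zero] at hmeas
    rw [hmeas] at hw'T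
    exact hw'T
  | succ r ihr =>
    intro fam I T w' hI h1 h2 h3 h4 h5 hZK hw'T h8 hmeas
    obtain ⟨i₀, hi₀⟩ := hI.nonempty
    -- basic facts
    have hYA : ∀ i ∈ I, Y ⊆ (fam i).A := by
      intro i hi u hu
      have : u ∈ (fam i).A ∩ (fam i).B := by rw [h3 i hi]; exact hYsub i hu
      exact this.1
    have hYB : ∀ i ∈ I, Y ⊆ (fam i).B := by
      intro i hi u hu
      have : u ∈ (fam i).A ∩ (fam i).B := by rw [h3 i hi]; exact hYsub i hu
      exact this.2
    have hwY : w ∉ Y := fun h => (h4 i₀ hi₀).2 (hYA i₀ hi₀ h)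
    have hw'Y : w' ∉ Y := fun h => (h5 i₀ hi₀).2 (hYB i₀ hi₀ h)
    by_cases hw'K : w' ∈ GS_pocket G Y w
    · -- same component: the fixed walk crosses infinitely many disjoint petals
      obtain ⟨p, hp⟩ := hw'K
      set q := p.reverse with hq
      have hqsup : ∀ u ∈ q.support, u ∉ Y := by
        intro u hu
        rw [hq, SimpleGraph.Walk.support_reverse] at hu
        exact hp u (List.mem_reverse.mp hu)
      have hex : ∀ i ∈ I, ∃ u, u ∈ q.support ∧ u ∈ X i \ Y := by
        intro i hi
        obtain ⟨u, hu, huX⟩ := GS_walk_cross q (h5 i hi).1 (h5 i hi).2 (h4 i hi).1 (h4 i hi).2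
        refine ⟨u, hu, ?_, hqsup u hu⟩
        rw [← h3 i hi]; exact ⟨huX.1, huX.2⟩
      have hex' : ∀ i, ∃ u, i ∈ I → (u ∈ q.support ∧ u ∈ X i \ Y) := by
        intro i
        by_cases hi : i ∈ I
        · obtain ⟨u, hu⟩ := hex i hi
          exact ⟨u, fun _ => hu⟩
        · exact ⟨w, fun h => absurd h hi⟩
      choose g hg using hex'
      obtain ⟨u0, _, hfib⟩ := GS_pigeon hI (q.support.finite_toSet) g
        (fun i hi => (hg i hi).1)
      obtain ⟨i, hi, j, hj, hij⟩ := hfib.nontrivial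
      have hiu : u0 ∈ X i \ Y := by rw [← hi.2]; exact (hg i hi.1).2
      have hju : u0 ∈ X j \ Y := by rw [← hj.2]; exact (hg j hj.1).2
      have : u0 ∈ (X i \ Y) ∩ (X j \ Y) := ⟨hiu, hju⟩
      rw [hdisj i j hij] at this
      exact this
    · -- different components
      set K' := GS_pocket G Y w' with hK'
      have hKK' : ∀ u, u ∈ GS_pocket G Y w → u ∉ K' := GS_pocket_disj hw'K
      set y' := GS_pocketSep G Y w' with hy'
      have hy'ord : y'.order < m := by rw [GS_pocketSep_order]; exact hYm
      rcases hPk.1.2.1 y' (hy'ord.trans hmk) with hy'P | hy'iP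
      · -- y' ∈ P (both profiles point into the w'-pocket) : contradiction
        have hy'P' : y' ∈ P' := GS_SS1 hP'k hmin hmk' hy'P hy'ord
        set ρ := (fam i₀).join y' with hρ
        have hρinv : ρ.inv ∉ P := hPk.2.2 (fam i₀) (h1 i₀ hi₀) y' hy'P
        have hsepρ : ρ.A ∩ ρ.B = Y := by
          ext u
          simp only [hρ, GS_join_A, GS_join_B, hy', GS_pocketSep_A, GS_pocketSep_B,
            Set.mem_inter_iff, Set.mem_union, Set.mem_compl_iff]
          constructor
          · rintro ⟨hu1, hu2, hu3⟩
            rcases hu3 with hu3 | hu3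
            · rcases hu1 with hu1 | hu1
              · by_cases huY : u ∈ Y
                · exact huY
                · have huX : u ∈ X i₀ := by rw [← h3 i₀ hi₀]; exact ⟨hu1, hu2⟩
                  exact absurd hu3 (hKK' u (hZK i₀ hi₀ ⟨huX, huY⟩))
              · exact absurd hu3 hu1
            · exact hu3
          · intro hu
            exact ⟨Or.inl (hYA i₀ hi₀ hu), hYB i₀ hi₀ hu, Or.inr hu⟩
        have hρord : ρ.order < m := by rw [GS_order_def, hsepρ]; exact hYm
        have hρP : ρ ∈ P := GS_orientP hPk (hρord.trans hmk) hρinv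
        have hρP' : ρ ∈ P' := GS_SS1 hP'k hmin hmk' hρP hρord
        have hle : GraphSep.le (fam i₀).inv.inv ρ :=
          ⟨Set.subset_union_left, Set.inter_subset_left⟩
        rcases hP'k.2.1 (fam i₀).inv (h2 i₀ hi₀) ρ hρP' hle with he | he
        · have hBA : (fam i₀).B = (fam i₀).A ∪ (GS_pocket G Y w')ᶜ := congrArg GraphSep.A he
          have hsub2 : (fam i₀).A ⊆ (fam i₀).B := by rw [hBA]; exact Set.subset_union_left
          exact hreg' (fam i₀).inv (h2 i₀ hi₀) (GS_B_univ hsub2)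
        · have hBB : (fam i₀).B = (fam i₀).B ∩ (GS_pocket G Y w' ∪ Y) :=
            congrArg GraphSep.A he
          have : (fam i₀).B ⊆ GS_pocket G Y w' ∪ Y := by
            rw [hBB]; exact Set.inter_subset_right
          rcases this (h4 i₀ hi₀).1 with h | h
          · exact hKK' w (GS_mem_pocket_self hwY) h
          · exact hwY h
      · -- y'.inv ∈ P (both profiles point away from the w'-pocket) : replace the family
        have hy'iP' : y'.inv ∈ P' := GS_SS1 hP'k hmin hmk'  hy'iP (by rwa [GS_order_inv])
        -- construct the replacement family
        set fam' : ℕ → GraphSep G := fun i => ((fam i).inv.join y'.inv).inv with hfam'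
        have key : ∀ i ∈ I, ((fam i).inv.join y'.inv).A ∩ ((fam i).inv.join y'.inv).B = X i ∧
            ((fam i).inv.join y'.inv) ∈ P' ∧ ((fam i).inv.join y'.inv).inv ∈ P := by
          intro i hi
          set σ := (fam i).inv.join y'.inv with hσ
          have hsepσ : σ.A ∩ σ.B = X i := by
            ext u
            simp only [hσ, GS_join_A, GS_join_B, GS_inv_A, GS_inv_B, hy', GS_pocketSep_A,
              GS_pocketSep_B, Set.mem_inter_iff, Set.mem_union, Set.mem_compl_iff, compl_compl]
            constructor
            · rintro ⟨hu1, hu2, hu3⟩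
              rcases hu1 with hu1 | hu1 | hu1
              · rw [← h3 i hi]; exact ⟨hu2, hu1⟩
              · exact absurd hu1 hu3
              · exact hYsub i hu1
            · intro hu
              have huAB : u ∈ (fam i).A ∩ (fam i).B := by rw [h3 i hi]; exact hu
              refine ⟨Or.inl huAB.2, huAB.1, ?_⟩
              by_cases huY : u ∈ Y
              · exact fun hK'mem => GS_pocket_not_mem_Y hK'mem huY
              · exact fun hK'mem => hKK' u (hZK i hi ⟨hu, huY⟩) hK'mem
          have hσord : σ.order = m := by rw [GS_order_def, hsepσ]; exact hXm i
          have hσinvP' : σ.inv ∉ P' := hP'k.2.2 (fam i).inv (h2 i hi) y'.inv hy'iP'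
          have hσP' : σ ∈ P' := GS_orientP hP'k (by rw [hσord]; exact hmk') hσinvP'
          have hσnP : σ ∉ P := by
            intro hσP
            have hle : GraphSep.le (fam i).inv σ :=
              ⟨Set.subset_union_left, Set.inter_subset_left⟩
            rcases hPk.2.1 (fam i) (h1 i hi) σ hσP hle with he | he
            · have hAB : (fam i).A = (fam i).B ∪ (GS_pocket G Y w' ∪ Y) :=
                congrArg GraphSep.A he
              have hsub2 : (fam i).B ⊆ (fam i).A := by rw [hAB]; exact Set.subset_union_left
              exact hreg (fam i) (h1 i hi) (GS_A_univ hsub2)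
            · have hAA : (fam i).A = (fam i).A ∩ (GS_pocket G Y w')ᶜ := congrArg GraphSep.A he
              have : (fam i).A ⊆ (GS_pocket G Y w')ᶜ := by
                rw [hAA]; exact Set.inter_subset_right
              exact this (h5 i hi).1 (GS_mem_pocket_self hw'Y)
          have hσiP : σ.inv ∈ P := by
            refine GS_orientP hPk ?_ (by rw [GS_inv_inv]; exact hσnP)
            rw [GS_order_inv, hσord]; exact hmk
          exact ⟨hsepσ, hσP', hσiP⟩
        -- new payments on the w'-side
        have hpay : ∀ i ∈ I, ∃ u, u ∈ (c'.A ∩ c'.B) ∧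
            u ∈ (fam' i).A ∧ u ∉ (fam' i).B := by
          intro i hi
          obtain ⟨hsepσ, hσP', hσiP⟩ := key i hi
          have hsep' : (fam' i).A ∩ (fam' i).B = X i := by
            rw [hfam']
            simp only [GS_inv_A, GS_inv_B]
            rw [Set.inter_comm]
            exact hsepσ
          have hne : ((c'.A ∩ c'.B) ∩ ((fam' i).A \ (fam' i).B)).Nonempty := by
            refine GS_F1' hPk hP'k hreg hreg' hmin hmk hmk' hσiP
              (by rw [hfam', GS_inv_inv]; exact hσP') hc' ?_ (hzc' i) ?_
            · rw [hsep']; exact hzX i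
            · rw [GS_order_def, hsep']; exact hXm i
          obtain ⟨u, hu⟩ := hne
          exact ⟨u, hu.1, hu.2.1, hu.2.2⟩
        have hpay' : ∀ i, ∃ u, i ∈ I → (u ∈ (c'.A ∩ c'.B) ∧
            u ∈ (fam' i).A ∧ u ∉ (fam' i).B) := by
          intro i
          by_cases hi : i ∈ I
          · obtain ⟨u, hu⟩ := hpay i hi
            exact ⟨u, fun _ => hu⟩
          · exact ⟨w, fun h => absurd h hi⟩
        choose g hg using hpay'
        have hcsep : (c'.A ∩ c'.B).Finite := by
          have := hP'k.1.1 c' hc'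
          rw [GS_order_def] at this
          exact Set.encard_lt_top_iff.mp (this.trans (WithTop.coe_lt_top k'))
        obtain ⟨w'', hw''c, hfib⟩ := GS_pigeon hI hcsep g (fun i hi => (hg i hi).1)
        set Iu := {i | i ∈ I ∧ g i = w''} with hIu
        have hIuI : ∀ i ∈ Iu, i ∈ I := fun i hi => hi.1
        obtain ⟨i₁, hi₁⟩ := hfib.nonempty
        -- invariants for the new family
        have h1' : ∀ i ∈ Iu, fam' i ∈ P := fun i hi => (key i (hIuI i hi)).2.2
        have h2' : ∀ i ∈ Iu, (fam' i).inv ∈ P' := by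
          intro i hi
          rw [hfam', GS_inv_inv]
          exact (key i (hIuI i hi)).2.1
        have h3' : ∀ i ∈ Iu, (fam' i).A ∩ (fam' i).B = X i := by
          intro i hi
          rw [hfam']
          simp only [GS_inv_A, GS_inv_B]
          rw [Set.inter_comm]
          exact (key i (hIuI i hi)).1
        have h4' : ∀ i ∈ Iu, w ∈ (fam' i).B ∧ w ∉ (fam' i).A := by
          intro i hi
          constructor
          · exact Or.inl (h4 i (hIuI i hi)).1
          · intro hw
            exact (h4 i (hIuI i hi)).2 hw.1
        have h5' : ∀ i ∈ Iu, w'' ∈ (fam' i).A ∧ w'' ∉ (fam' i).B := by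
          intro i hi
          exact ⟨hi.2 ▸ (hg i (hIuI i hi)).2.1, hi.2 ▸ (hg i (hIuI i hi)).2.2⟩
        have h8' : ∀ x ∈ insert w' T, ∀ i ∈ Iu, x ∈ (fam' i).B ∧ x ∉ (fam' i).A := by
          intro x hx i hi
          rcases Set.mem_insert_iff.mp hx with rfl | hx
          · constructor
            · exact Or.inr (Or.inl (GS_mem_pocket_self hw'Y))
            · intro hmem
              exact hmem.2 (GS_mem_pocket_self hw'Y)
          · have := h8 x hx i (hIuI i hi)
            constructor
            · exact Or.inl this.1
            · intro hmem
              exact this.2 hmem.1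
        have hw''T : w'' ∈ (c'.A ∩ c'.B) \ insert w' T := by
          refine ⟨hw''c, ?_⟩
          intro hmem
          have := h8' w'' hmem i₁ hi₁
          exact this.2 (h5' i₁ hi₁).1
        have hmeas' : ((c'.A ∩ c'.B) \ insert w' T).encard ≤ r := by
          have hdd : (c'.A ∩ c'.B) \ insert w' T = ((c'.A ∩ c'.B) \ T) \ {w'} := by
            ext u
            simp only [Set.mem_diff, Set.mem_insert_iff, Set.mem_singleton_iff]
            tauto
          have hone : (((c'.A ∩ c'.B) \ T) \ {w'}).encard + 1 = ((c'.A ∩ c'.B) \ T).encard :=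
            Set.encard_diff_singleton_add_one hw'T
          have : (((c'.A ∩ c'.B) \ T) \ {w'}).encard + 1 ≤ (r : ℕ∞) + 1 := by
            rw [hone]
            rw [show ((r : ℕ∞) + 1) = ((r + 1 : ℕ) : ℕ∞) by push_cast; ring]
            exact hmeas
          rw [hdd]
          exact (ENat.add_le_add_iff_right ENat.one_ne_top).mp this
        exact ihr fam' Iu (insert w' T) w'' (hfib) h1' h2' h3' h4' h5'
          (fun i hi => hZK i (hIuI i hi)) hw''T h8' hmeas'

end Stmt9Aux6

section Stmt9Aux7

open GraphSep

variable {V : Type} {G : SimpleGraph V} {P P' : Set (GraphSep G)} {k k' : ℕ} {m : ℕ∞}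

/-- Phase 1 of the main argument: the `w`-side anchor is repeatedly replaced, consuming
elements of the separator of `c`; on success we hand over to phase 2. -/
lemma GS_phase1 (hPk : IsProfile (k : ℕ∞) P) (hP'k : IsProfile (k' : ℕ∞) P')
    (hreg : RegularP P) (hreg' : RegularP P')
    (hmin : ∀ u : GraphSep G, Distinguishes u P P' → m ≤ u.order)
    (hmk : m < k) (hmk' : m < k')
    (Y : Set V) (X : ℕ → Set V) (z : ℕ → V) (c c' : GraphSep G)
    (hc : c ∈ P) (hc' : c' ∈ P')
    (hYsub : ∀ i, Y ⊆ X i)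
    (hdisj : ∀ i j, i ≠ j → (X i \ Y) ∩ (X j \ Y) = ∅)
    (hXm : ∀ i, (X i).encard = m)
    (hzX : ∀ i, z i ∈ X i) (hzc : ∀ i, z i ∉ c.B) (hzc' : ∀ i, z i ∉ c'.B)
    (hYm : Y.encard < m) :
    ∀ (r : ℕ) (fam : ℕ → GraphSep G) (I : Set ℕ) (T : Set V) (w w' : V),
    I.Infinite →
    (∀ i ∈ I, fam i ∈ P) →
    (∀ i ∈ I, (fam i).inv ∈ P') →
    (∀ i ∈ I, (fam i).A ∩ (fam i).B = X i) →
    (∀ i ∈ I, w ∈ (fam i).B ∧ w ∉ (fam i).A) →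
    (∀ i ∈ I, w' ∈ (fam i).A ∧ w' ∉ (fam i).B) →
    (w ∈ (c.A ∩ c.B) \ T) →
    (w' ∈ c'.A ∩ c'.B) →
    (∀ x ∈ T, ∀ i ∈ I, x ∈ (fam i).A ∧ x ∉ (fam i).B) →
    ((c.A ∩ c.B) \ T).encard ≤ r →
    False := by
  intro r
  induction r with
  | zero =>
    intro fam I T w w' _ _ _ _ _ _ hwT _ _ hmeas
    rw [Nat.cast_zero, nonpos_iff_eq_zero, Set.encard_eq_zero] at hmeas
    rw [hmeas] at hwT
    exact hwT
  | succ r ihr =>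
    intro fam I T w w' hI h1 h2 h3 h4 h5 hwT hw'c' h8 hmeas
    obtain ⟨i₀, hi₀⟩ := hI.nonempty
    have hYA : ∀ i ∈ I, Y ⊆ (fam i).A := by
      intro i hi u hu
      have : u ∈ (fam i).A ∩ (fam i).B := by rw [h3 i hi]; exact hYsub i hu
      exact this.1
    have hYB : ∀ i ∈ I, Y ⊆ (fam i).B := by
      intro i hi u hu
      have : u ∈ (fam i).A ∩ (fam i).B := by rw [h3 i hi]; exact hYsub i hu
      exact this.2
    have hwY : w ∉ Y := fun h => (h4 i₀ hi₀).2 (hYA i₀ hi₀ h)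
    have hw'Y : w' ∉ Y := fun h => (h5 i₀ hi₀).2 (hYB i₀ hi₀ h)
    have hXfin : ∀ i, (X i).Finite := by
      intro i
      rw [← Set.encard_lt_top_iff, hXm i]
      exact lt_of_lt_of_le hmk (le_top)
    by_cases hw'K : w' ∈ GS_pocket G Y w
    · -- same component: contradiction with disjoint petals
      obtain ⟨p, hp⟩ := hw'K
      set q := p.reverse with hq
      have hqsup : ∀ u ∈ q.support, u ∉ Y := by
        intro u hu
        rw [hq, SimpleGraph.Walk.support_reverse] at hu
        exact hp u (List.mem_reverse.mp hu)
      have hex : ∀ i ∈ I, ∃ u, u ∈ q.support ∧ u ∈ X i \ Y := by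
        intro i hi
        obtain ⟨u, hu, huX⟩ := GS_walk_cross q (h5 i hi).1 (h5 i hi).2 (h4 i hi).1 (h4 i hi).2
        refine ⟨u, hu, ?_, hqsup u hu⟩
        rw [← h3 i hi]; exact ⟨huX.1, huX.2⟩
      have hex' : ∀ i, ∃ u, i ∈ I → (u ∈ q.support ∧ u ∈ X i \ Y) := by
        intro i
        by_cases hi : i ∈ I
        · obtain ⟨u, hu⟩ := hex i hi
          exact ⟨u, fun _ => hu⟩
        · exact ⟨w, fun h => absurd h hi⟩
      choose g hg using hex'
      obtain ⟨u0, _, hfib⟩ := GS_pigeon hI (q.support.finite_toSet) g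
        (fun i hi => (hg i hi).1)
      obtain ⟨i, hi, j, hj, hij⟩ := hfib.nontrivial
      have hiu : u0 ∈ X i \ Y := by rw [← hi.2]; exact (hg i hi.1).2
      have hju : u0 ∈ X j \ Y := by rw [← hj.2]; exact (hg j hj.1).2
      have : u0 ∈ (X i \ Y) ∩ (X j \ Y) := ⟨hiu, hju⟩
      rw [hdisj i j hij] at this
      exact this
    · set K := GS_pocket G Y w with hK
      have hwK : w ∈ K := GS_mem_pocket_self hwY
      set y := GS_pocketSep G Y w with hy
      have hyord : y.order < m := by rw [hy, GS_pocketSep_order]; exact hYm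
      rcases hPk.1.2.1 y (hyord.trans hmk) with hyP | hyiP
      · -- y ∈ P : all petals are confined to K; hand over to phase 2
        have hyP' : y ∈ P' := GS_SS1 hP'k hmin hmk' hyP hyord
        have hZK : ∀ i ∈ I, X i \ Y ⊆ K := by
          intro i hi
          by_contra hcon
          rw [Set.not_subset] at hcon
          obtain ⟨ζ, hζ1, hζ2⟩ := hcon
          set ρ := (fam i).inv.join y with hρ
          have hρinv : ρ.inv ∉ P' := hP'k.2.2 (fam i).inv (h2 i hi) y hyP'
          have hsepρ : ρ.A ∩ ρ.B = Y ∪ ((X i \ Y) ∩ K) := by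
            ext u
            simp only [hρ, GS_join_A, GS_join_B, GS_inv_A, GS_inv_B, hy, GS_pocketSep_A,
              GS_pocketSep_B, Set.mem_inter_iff, Set.mem_union, Set.mem_compl_iff,
              Set.mem_diff]
            constructor
            · rintro ⟨hu1, hu2, hu3⟩
              by_cases huY : u ∈ Y
              · exact Or.inl huY
              · rcases hu3 with hu3 | hu3
                · rcases hu1 with hu1 | hu1
                  · have huX : u ∈ X i := by rw [← h3 i hi]; exact ⟨hu2, hu1⟩
                    exact Or.inr ⟨⟨huX, huY⟩, hu3⟩
                  · exact absurd hu3 hu1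
                · exact absurd hu3 huY
            · rintro (hu | ⟨⟨huX, huY⟩, huK⟩)
              · exact ⟨Or.inl (hYB i hi hu), hYA i hi hu, Or.inr hu⟩
              · have : u ∈ (fam i).A ∩ (fam i).B := by rw [h3 i hi]; exact huX
                exact ⟨Or.inl this.2, this.1, Or.inl huK⟩
          have hsub : ρ.A ∩ ρ.B ⊆ X i \ {ζ} := by
            rw [hsepρ]
            rintro u (hu | hu)
            · refine ⟨hYsub i hu, ?_⟩
              simp only [Set.mem_singleton_iff]
              rintro rfl
              exact hζ1.2 hu
            · refine ⟨hu.1.1, ?_⟩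
              simp only [Set.mem_singleton_iff]
              rintro rfl
              exact hζ2 hu.2
          have hρord : ρ.order < m := by
            rw [GS_order_def]
            calc (ρ.A ∩ ρ.B).encard ≤ (X i \ {ζ}).encard := Set.encard_mono hsub
              _ < (X i).encard := by
                  refine Set.Finite.encard_lt_encard (hXfin i).diff ⟨Set.diff_subset, fun hss => ?_⟩
                  exact (hss hζ1.1).2 rfl
              _ = m := hXm i
          have hρP' : ρ ∈ P' := GS_orientP hP'k (hρord.trans hmk') hρinv
          have hρP : ρ ∈ P := GS_SS2 hPk hmin hmk hρP' hρord
          have hle : GraphSep.le (fam i).inv ρ :=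
            ⟨Set.subset_union_left, Set.inter_subset_left⟩
          rcases hPk.2.1 (fam i) (h1 i hi) ρ hρP hle with he | he
          · have hAB : (fam i).A = (fam i).B ∪ (GS_pocket G Y w)ᶜ := congrArg GraphSep.A he
            have hsub2 : (fam i).B ⊆ (fam i).A := by rw [hAB]; exact Set.subset_union_left
            exact hreg (fam i) (h1 i hi) (GS_A_univ hsub2)
          · have hAA : (fam i).A = (fam i).A ∩ (GS_pocket G Y w ∪ Y) := congrArg GraphSep.A he
            have : (fam i).A ⊆ GS_pocket G Y w ∪ Y := by
              rw [hAA]; exact Set.inter_subset_right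
            rcases this (h5 i hi).1 with h | h
            · exact hw'K h
            · exact hw'Y h
        -- hand over to phase 2
        have hcsep' : (c'.A ∩ c'.B).Finite := by
          have := hP'k.1.1 c' hc'
          rw [GS_order_def] at this
          exact Set.encard_lt_top_iff.mp (this.trans (WithTop.coe_lt_top k'))
        obtain ⟨n, hn⟩ := Set.Finite.exists_encard_eq_coe hcsep'
        refine GS_phase2 hPk hP'k hreg hreg' hmin hmk hmk' Y X z c' hc' hYsub hdisj hXm hzX
          hzc' hYm w n fam I ∅ w' hI h1 h2 h3 h4 h5 hZK ⟨hw'c', Set.notMem_empty w'⟩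
          (fun x hx => absurd hx (Set.notMem_empty x)) ?_
        rw [Set.diff_empty, hn]
      · -- y.inv ∈ P : absorb the pocket K into the A-side and recurse
        have hyiP' : y.inv ∈ P' := GS_SS1 hP'k hmin hmk' hyiP (by rwa [GS_order_inv])
        have hZK0 : ∀ i ∈ I, (X i \ Y) ∩ K = ∅ := by
          intro i hi
          by_contra hcon
          obtain ⟨ζ, hζ⟩ := Set.nonempty_iff_ne_empty.mpr hcon
          set ρ := (fam i).join y.inv with hρ
          have hρinv : ρ.inv ∉ P := hPk.2.2 (fam i) (h1 i hi) y.inv hyiP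
          have hsepρ : ρ.A ∩ ρ.B = Y ∪ ((X i \ Y) \ K) := by
            ext u
            simp only [hρ, GS_join_A, GS_join_B, GS_inv_A, GS_inv_B, hy, GS_pocketSep_A,
              GS_pocketSep_B, Set.mem_inter_iff, Set.mem_union, Set.mem_compl_iff,
              Set.mem_diff]
            constructor
            · rintro ⟨hu1, hu2, hu3⟩
              by_cases huY : u ∈ Y
              · exact Or.inl huY
              · rcases hu1 with hu1 | hu1 | hu1
                · have huX : u ∈ X i := by rw [← h3 i hi]; exact ⟨hu1, hu2⟩
                  exact Or.inr ⟨⟨huX, huY⟩, hu3⟩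
                · exact absurd hu1 hu3
                · exact absurd hu1 huY
            · rintro (hu | ⟨⟨huX, huY⟩, huK⟩)
              · refine ⟨Or.inr (Or.inr hu), hYB i hi hu, ?_⟩
                exact fun hK' => GS_pocket_not_mem_Y hK' hu
              · have : u ∈ (fam i).A ∩ (fam i).B := by rw [h3 i hi]; exact huX
                exact ⟨Or.inl this.1, this.2, huK⟩
          have hsub : ρ.A ∩ ρ.B ⊆ X i \ {ζ} := by
            rw [hsepρ]
            rintro u (hu | hu)
            · refine ⟨hYsub i hu, ?_⟩
              simp only [Set.mem_singleton_iff]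
              rintro rfl
              exact hζ.1.2 hu
            · refine ⟨hu.1.1, ?_⟩
              simp only [Set.mem_singleton_iff]
              rintro rfl
              exact hu.2 hζ.2
          have hρord : ρ.order < m := by
            rw [GS_order_def]
            calc (ρ.A ∩ ρ.B).encard ≤ (X i \ {ζ}).encard := Set.encard_mono hsub
              _ < (X i).encard := by
                  refine Set.Finite.encard_lt_encard (hXfin i).diff ⟨Set.diff_subset, fun hss => ?_⟩
                  exact (hss hζ.1.1).2 rfl
              _ = m := hXm i
          have hρP : ρ ∈ P := GS_orientP hPk (hρord.trans hmk) hρinv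
          have hρP' : ρ ∈ P' := GS_SS1 hP'k hmin hmk' hρP hρord
          have hle : GraphSep.le (fam i).inv.inv ρ :=
            ⟨Set.subset_union_left, Set.inter_subset_left⟩
          rcases hP'k.2.1 (fam i).inv (h2 i hi) ρ hρP' hle with he | he
          · have hBA : (fam i).B = (fam i).A ∪ (GS_pocket G Y w ∪ Y) := congrArg GraphSep.A he
            have hsub2 : (fam i).A ⊆ (fam i).B := by rw [hBA]; exact Set.subset_union_left
            exact hreg' (fam i).inv (h2 i hi) (GS_B_univ hsub2)
          · have hBB : (fam i).B = (fam i).B ∩ (GS_pocket G Y w)ᶜ := congrArg GraphSep.A he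
            have : (fam i).B ⊆ (GS_pocket G Y w)ᶜ := by
              rw [hBB]; exact Set.inter_subset_right
            exact this (h4 i hi).1 hwK
        -- the full replacement family
        set fam' : ℕ → GraphSep G := fun i => (fam i).join y.inv with hfam'
        have key : ∀ i ∈ I, (fam' i).A ∩ (fam' i).B = X i ∧ fam' i ∈ P ∧ (fam' i).inv ∈ P' := by
          intro i hi
          have hsepσ : (fam' i).A ∩ (fam' i).B = X i := by
            ext u
            simp only [hfam', GS_join_A, GS_join_B, GS_inv_A, GS_inv_B, hy, GS_pocketSep_A,
              GS_pocketSep_B, Set.mem_inter_iff, Set.mem_union, Set.mem_compl_iff]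
            constructor
            · rintro ⟨hu1, hu2, hu3⟩
              rcases hu1 with hu1 | hu1 | hu1
              · rw [← h3 i hi]; exact ⟨hu1, hu2⟩
              · exact absurd hu1 hu3
              · exact hYsub i hu1
            · intro hu
              have huAB : u ∈ (fam i).A ∩ (fam i).B := by rw [h3 i hi]; exact hu
              refine ⟨Or.inl huAB.1, huAB.2, ?_⟩
              by_cases huY : u ∈ Y
              · exact fun hKmem => GS_pocket_not_mem_Y hKmem huY
              · intro hKmem
                have : u ∈ (X i \ Y) ∩ K := ⟨⟨hu, huY⟩, hKmem⟩
                rw [hZK0 i hi] at this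
                exact this
          have hσord : (fam' i).order = m := by rw [GS_order_def, hsepσ]; exact hXm i
          have hσinvP : (fam' i).inv ∉ P := hPk.2.2 (fam i) (h1 i hi) y.inv hyiP
          have hσP : fam' i ∈ P := GS_orientP hPk (by rw [hσord]; exact hmk) hσinvP
          have hσnP' : fam' i ∉ P' := by
            intro hσP'
            have hle : GraphSep.le (fam i).inv.inv (fam' i) :=
              ⟨Set.subset_union_left, Set.inter_subset_left⟩
            rcases hP'k.2.1 (fam i).inv (h2 i hi) (fam' i) hσP' hle with he | he
            · have hBA : (fam i).B = (fam i).A ∪ (GS_pocket G Y w ∪ Y) :=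
                congrArg GraphSep.A he
              have hsub2 : (fam i).A ⊆ (fam i).B := by rw [hBA]; exact Set.subset_union_left
              exact hreg' (fam i).inv (h2 i hi) (GS_B_univ hsub2)
            · have hBB : (fam i).B = (fam i).B ∩ (GS_pocket G Y w)ᶜ := congrArg GraphSep.A he
              have : (fam i).B ⊆ (GS_pocket G Y w)ᶜ := by
                rw [hBB]; exact Set.inter_subset_right
              exact this (h4 i hi).1 hwK
          have hσiP' : (fam' i).inv ∈ P' := by
            refine GS_orientP hP'k ?_ (by rw [GS_inv_inv]; exact hσnP')
            rw [GS_order_inv, hσord]; exact hmk'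
          exact ⟨hsepσ, hσP, hσiP'⟩
        -- new payments on the w-side
        have hpay : ∀ i ∈ I, ∃ u, u ∈ (c.A ∩ c.B) ∧
            u ∈ (fam' i).B ∧ u ∉ (fam' i).A := by
          intro i hi
          obtain ⟨hsepσ, hσP, hσiP'⟩ := key i hi
          have hne : ((c.A ∩ c.B) ∩ ((fam' i).B \ (fam' i).A)).Nonempty := by
            refine GS_F1 hPk hP'k hreg hreg' hmin hmk hmk' hσP hσiP' hc ?_ (hzc i) ?_
            · rw [hsepσ]; exact hzX i
            · rw [GS_order_def, hsepσ]; exact hXm i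
          obtain ⟨u, hu⟩ := hne
          exact ⟨u, hu.1, hu.2.1, hu.2.2⟩
        have hpay' : ∀ i, ∃ u, i ∈ I → (u ∈ (c.A ∩ c.B) ∧
            u ∈ (fam' i).B ∧ u ∉ (fam' i).A) := by
          intro i
          by_cases hi : i ∈ I
          · obtain ⟨u, hu⟩ := hpay i hi
            exact ⟨u, fun _ => hu⟩
          · exact ⟨w, fun h => absurd h hi⟩
        choose g hg using hpay'
        have hcsep : (c.A ∩ c.B).Finite := by
          have := hPk.1.1 c hc
          rw [GS_order_def] at this
          exact Set.encard_lt_top_iff.mp (this.trans (WithTop.coe_lt_top k))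
        obtain ⟨w₂, hw₂c, hfib⟩ := GS_pigeon hI hcsep g (fun i hi => (hg i hi).1)
        set Iu := {i | i ∈ I ∧ g i = w₂} with hIu
        have hIuI : ∀ i ∈ Iu, i ∈ I := fun i hi => hi.1
        obtain ⟨i₁, hi₁⟩ := hfib.nonempty
        have h1' : ∀ i ∈ Iu, fam' i ∈ P := fun i hi => (key i (hIuI i hi)).2.1
        have h2' : ∀ i ∈ Iu, (fam' i).inv ∈ P' := fun i hi => (key i (hIuI i hi)).2.2
        have h3' : ∀ i ∈ Iu, (fam' i).A ∩ (fam' i).B = X i := fun i hi => (key i (hIuI i hi)).1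
        have h4' : ∀ i ∈ Iu, w₂ ∈ (fam' i).B ∧ w₂ ∉ (fam' i).A := by
          intro i hi
          exact ⟨hi.2 ▸ (hg i (hIuI i hi)).2.1, hi.2 ▸ (hg i (hIuI i hi)).2.2⟩
        have h5' : ∀ i ∈ Iu, w' ∈ (fam' i).A ∧ w' ∉ (fam' i).B := by
          intro i hi
          constructor
          · exact Or.inl (h5 i (hIuI i hi)).1
          · intro hmem
            exact (h5 i (hIuI i hi)).2 hmem.1
        have h8' : ∀ x ∈ insert w T, ∀ i ∈ Iu, x ∈ (fam' i).A ∧ x ∉ (fam' i).B := by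
          intro x hx i hi
          rcases Set.mem_insert_iff.mp hx with rfl | hx
          · constructor
            · exact Or.inr (Or.inl hwK)
            · intro hmem
              exact hmem.2 hwK
          · have := h8 x hx i (hIuI i hi)
            constructor
            · exact Or.inl this.1
            · intro hmem
              exact this.2 hmem.1
        have hw₂T : w₂ ∈ (c.A ∩ c.B) \ insert w T := by
          refine ⟨hw₂c, ?_⟩
          intro hmem
          have := h8' w₂ hmem i₁ hi₁
          exact this.2 (h4' i₁ hi₁).1
        have hmeas' : ((c.A ∩ c.B) \ insert w T).encard ≤ r := by
          have hdd : (c.A ∩ c.B) \ insert w T = ((c.A ∩ c.B) \ T) \ {w} := by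
            ext u
            simp only [Set.mem_diff, Set.mem_insert_iff, Set.mem_singleton_iff]
            tauto
          have hone : (((c.A ∩ c.B) \ T) \ {w}).encard + 1 = ((c.A ∩ c.B) \ T).encard :=
            Set.encard_diff_singleton_add_one hwT
          have hle2 : (((c.A ∩ c.B) \ T) \ {w}).encard + 1 ≤ (r : ℕ∞) + 1 := by
            rw [hone]
            rw [show ((r : ℕ∞) + 1) = ((r + 1 : ℕ) : ℕ∞) by push_cast; ring]
            exact hmeas
          rw [hdd]
          exact (ENat.add_le_add_iff_right ENat.one_ne_top).mp hle2
        exact ihr fam' Iu (insert w T) w₂ w' hfib h1' h2' h3' h4' h5' hw₂T hw'c' h8' hmeas'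

end Stmt9Aux7

open GraphSep in
/-- distinguishable regular bounded profiles have only finitely many
distinct separators of efficient distinguishers. -/
theorem stmt9 {V : Type} (G : SimpleGraph V) (hG : G.Connected)
    (P P' : Set (GraphSep G))
    (hP : IsProfileIn G P) (hP' : IsProfileIn G P')
    (hreg : RegularP P) (hreg' : RegularP P')
    (hbdd : BoundedP P) (hbdd' : BoundedP P')
    (hdist : Distinguishable P P') :
    {X : Set V | ∃ s : GraphSep G, EffDist s P P' ∧ s.A ∩ s.B = X}.Finite := by
  classical
  by_contra hfin
  have hinf : {X : Set V | ∃ s : GraphSep G, EffDist s P P' ∧ s.A ∩ s.B = X}.Infinite := hfin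
  set S := {X : Set V | ∃ s : GraphSep G, EffDist s P P' ∧ s.A ∩ s.B = X} with hS
  obtain ⟨k, hPk⟩ := hbdd.1
  obtain ⟨k', hP'k⟩ := hbdd'.1
  -- orient efficient distinguishers into P
  have horient : ∀ s : GraphSep G, EffDist s P P' →
      ∃ t : GraphSep G, t ∈ P ∧ t.inv ∈ P' ∧ t.A ∩ t.B = s.A ∩ s.B ∧ EffDist t P P' := by
    intro s hs
    rcases hs.1 with ⟨h1, h2⟩ | ⟨h1, h2⟩
    · exact ⟨s, h1, h2, rfl, hs⟩
    · refine ⟨s.inv, h1, by rw [GS_inv_inv]; exact h2, by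
        rw [GS_inv_A, GS_inv_B, Set.inter_comm], GS_effdist_inv hs⟩
  -- the common order m of all efficient distinguishers
  obtain ⟨X₀, s₀, hs₀e, _⟩ := hinf.nonempty
  obtain ⟨t₀, ht₀P, ht₀P', _, ht₀e⟩ := horient s₀ hs₀e
  set m := t₀.order with hm
  have hmin : ∀ u : GraphSep G, Distinguishes u P P' → m ≤ u.order := fun u hu => ht₀e.2 u hu
  have hmk : m < k := hPk.1.1 t₀ ht₀P
  have hmk' : m < k' := by
    have := hP'k.1.1 t₀.inv ht₀P'
    rwa [GS_order_inv] at this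
  have hScard : ∀ X ∈ S, X.encard = m := by
    rintro X ⟨s, hse, hssep⟩
    obtain ⟨t, htP, htP', htsep, hte⟩ := horient s hse
    have h1 : t.order ≤ m := hte.2 t₀ ht₀e.1
    have h2 : m ≤ t.order := hmin t hte.1
    rw [← hssep, ← htsep, ← GS_order_def]
    exact le_antisymm h1 h2
  have hmtop : m ≠ ⊤ := fun h => by
    rw [h] at hmk
    exact absurd hmk (not_lt.mpr le_top)
  set m' := m.toNat with hm'def
  have hm' : (m' : ℕ∞) = m := ENat.coe_toNat hmtop
  -- sunflower
  obtain ⟨Y, F, hFS, hYsub0, hne0, hdisj0⟩ :=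
    GS_sunflower m' S hinf (fun X hX => by rw [hScard X hX, hm'])
  -- witnesses
  have hwit : ∀ i, ∃ t : GraphSep G, t ∈ P ∧ t.inv ∈ P' ∧ t.A ∩ t.B = F i := by
    intro i
    obtain ⟨s, hse, hssep⟩ := hFS i
    obtain ⟨t, htP, htP', htsep, _⟩ := horient s hse
    exact ⟨t, htP, htP', by rw [htsep, hssep]⟩
  choose fam₀ hfam₀1 hfam₀2 hfam₀3 using hwit
  have hzex : ∀ i, ∃ v, v ∈ F i \ Y := hne0
  choose z₀ hz₀ using hzex
  have hz₀inj : Function.Injective z₀ := by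
    intro i j hij
    by_contra hne
    have : z₀ i ∈ (F i \ Y) ∩ (F j \ Y) := ⟨hz₀ i, hij ▸ hz₀ j⟩
    rw [hdisj0 i j hne] at this
    exact this
  -- boundedness: escape members for both profiles
  obtain ⟨c, hc, hIc⟩ := GS_bdd_escape hbdd hz₀inj
  obtain ⟨c', hc', hIc'⟩ := GS_bdd_escape hbdd' hz₀inj
  have hI₀mem : {i : ℕ | z₀ i ∉ c.B} ∩ {i : ℕ | z₀ i ∉ c'.B} ∈ Filter.hyperfilter ℕ :=
    Filter.inter_mem hIc hIc'
  have hI₀inf : ({i : ℕ | z₀ i ∉ c.B} ∩ {i : ℕ | z₀ i ∉ c'.B}).Infinite :=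
    GS_hyper_infinite hI₀mem
  -- reindex along an enumeration of the good indices
  set e0 := Set.Infinite.natEmbedding _ hI₀inf with he0
  set e : ℕ → ℕ := fun n => (e0 n).1 with he
  have heinj : Function.Injective e := fun a b hab => by
    have : e0 a = e0 b := Subtype.ext hab
    exact e0.injective this
  have hemem : ∀ n, z₀ (e n) ∉ c.B ∧ z₀ (e n) ∉ c'.B := fun n =>
    ⟨((e0 n).2).1, ((e0 n).2).2⟩
  set X : ℕ → Set V := fun n => F (e n) with hX
  set z : ℕ → V := fun n => z₀ (e n) with hz
  set fam : ℕ → GraphSep G := fun n => fam₀ (e n) with hfam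
  have hYsub : ∀ i, Y ⊆ X i := fun i => hYsub0 (e i)
  have hdisj : ∀ i j, i ≠ j → (X i \ Y) ∩ (X j \ Y) = ∅ := fun i j hij =>
    hdisj0 (e i) (e j) (fun h => hij (heinj h))
  have hXm : ∀ i, (X i).encard = m := fun i => hScard (F (e i)) (hFS (e i))
  have hXfin : ∀ i, (X i).Finite := by
    intro i
    rw [← Set.encard_lt_top_iff, hXm i]
    exact lt_of_lt_of_le hmk le_top
  have hzX : ∀ i, z i ∈ X i := fun i => (hz₀ (e i)).1
  have hzc : ∀ i, z i ∉ c.B := fun i => (hemem i).1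
  have hzc' : ∀ i, z i ∉ c'.B := fun i => (hemem i).2
  have hh1 : ∀ i, fam i ∈ P := fun i => hfam₀1 (e i)
  have hh2 : ∀ i, (fam i).inv ∈ P' := fun i => hfam₀2 (e i)
  have hh3 : ∀ i, (fam i).A ∩ (fam i).B = X i := fun i => hfam₀3 (e i)
  have hfamord : ∀ i, (fam i).order = m := by
    intro i
    rw [GS_order_def, hh3 i]
    exact hXm i
  have hYm : Y.encard < m := by
    have hss : Y ⊂ X 0 := by
      refine ⟨hYsub 0, fun hsub => ?_⟩
      obtain ⟨v, hv⟩ := hne0 (e 0)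
      exact hv.2 (hsub hv.1)
    have := Set.Finite.encard_lt_encard ((hXfin 0).subset (hYsub 0)) hss
    rwa [hXm 0] at this
  -- initial payments
  have hpay1 : ∀ i, ∃ u, u ∈ (c.A ∩ c.B) ∧ u ∈ (fam i).B ∧ u ∉ (fam i).A := by
    intro i
    have hne : ((c.A ∩ c.B) ∩ ((fam i).B \ (fam i).A)).Nonempty :=
      GS_F1 hPk hP'k hreg hreg' hmin hmk hmk' (hh1 i) (hh2 i) hc
        (by rw [hh3 i]; exact hzX i) (hzc i) (hfamord i)
    obtain ⟨u, hu⟩ := hne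
    exact ⟨u, hu.1, hu.2.1, hu.2.2⟩
  choose g1 hg1 using hpay1
  have hcsep : (c.A ∩ c.B).Finite := by
    have := hPk.1.1 c hc
    rw [GS_order_def] at this
    exact Set.encard_lt_top_iff.mp (this.trans (WithTop.coe_lt_top k))
  have hc'sep : (c'.A ∩ c'.B).Finite := by
    have := hP'k.1.1 c' hc'
    rw [GS_order_def] at this
    exact Set.encard_lt_top_iff.mp (this.trans (WithTop.coe_lt_top k'))
  obtain ⟨w, hwc, hfib1⟩ := GS_pigeon Set.infinite_univ hcsep g1 (fun i _ => (hg1 i).1)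
  have hpay2 : ∀ i, ∃ u, u ∈ (c'.A ∩ c'.B) ∧ u ∈ (fam i).A ∧ u ∉ (fam i).B := by
    intro i
    have hne : ((c'.A ∩ c'.B) ∩ ((fam i).A \ (fam i).B)).Nonempty :=
      GS_F1' hPk hP'k hreg hreg' hmin hmk hmk' (hh1 i) (hh2 i) hc'
        (by rw [hh3 i]; exact hzX i) (hzc' i) (hfamord i)
    obtain ⟨u, hu⟩ := hne
    exact ⟨u, hu.1, hu.2.1, hu.2.2⟩
  choose g2 hg2 using hpay2
  obtain ⟨w', hw'c, hfib2⟩ := GS_pigeon hfib1 hc'sep g2 (fun i _ => (hg2 i).1)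
  set I₂ := {i | i ∈ {i | i ∈ Set.univ ∧ g1 i = w} ∧ g2 i = w'} with hI₂
  obtain ⟨n, hn⟩ := Set.Finite.exists_encard_eq_coe (hcsep.diff (t := (∅ : Set V)))
  refine GS_phase1 hPk hP'k hreg hreg' hmin hmk hmk' Y X z c c' hc hc' hYsub hdisj hXm hzX
    hzc hzc' hYm n fam I₂ ∅ w w' hfib2 (fun i _ => hh1 i) (fun i _ => hh2 i)
    (fun i _ => hh3 i) ?_ ?_ ⟨hwc, Set.notMem_empty w⟩ hw'c
    (fun x hx => absurd hx (Set.notMem_empty x)) (le_of_eq hn)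
  · intro i hi
    have hgw : g1 i = w := hi.1.2
    exact ⟨hgw ▸ (hg1 i).2.1, hgw ▸ (hg1 i).2.2⟩
  · intro i hi
    have hgw : g2 i = w' := hi.2
    exact ⟨hgw ▸ (hg2 i).2.1, hgw ▸ (hg2 i).2.2⟩
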